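/- If each covering map in a sequence of locally compact abelian topological groups is a continuous group homomorphism, then the inverse limit is a locally compact abelian topological group, and the product measure constructed from a Haar measure on X_1 and the unit-volume Haar measure on the profinite fiber group is a Haar measure on the inverse limit. -/

import Mathlib

open MeasureTheory

private def stmt5Tower {X : ℕ → Type*} [∀ i, CommGroup (X i)]
    (P : ∀ i : ℕ, X (i + 1) →* X i) (C : Set (X 0)) : ∀ i, Set (X i)
  | 0 => C
  | (i + 1) => P i ⁻¹' stmt5Tower P C i

/-- If each covering map in a sequence of locally compact abelian topological groups is a
continuous surjective group homomorphism with finite kernel, then the inverse limit `S`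
(a subgroup of the product) is a locally compact abelian topological group, and the
fiberwise product measure `μinf` built from a Haar measure `μ1` on `X 0` and the unit-volume
Haar measures `ν x` on the fibers (probability measures on the fibers, invariant under the
fiber group `ker (P∞,0)`) is a Haar measure on the inverse limit. -/
theorem stmt5 (X : ℕ → Type*) [∀ i, CommGroup (X i)] [∀ i, TopologicalSpace (X i)]
    [∀ i, IsTopologicalGroup (X i)] [∀ i, LocallyCompactSpace (X i)] [∀ i, T2Space (X i)]
    (P : ∀ i : ℕ, X (i + 1) →* X i)
    (hcont : ∀ i, Continuous (P i))
    (hsurj : ∀ i, Function.Surjective (P i))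
    (hkerfin : ∀ i, Finite ((P i).ker))
    (hcov : ∀ i, IsCoveringMap (P i))
    (S : Subgroup (∀ i, X i))
    (hS : (S : Set (∀ i, X i)) = {x | ∀ i, P i (x (i + 1)) = x i})
    [MeasurableSpace (X 0)] [BorelSpace (X 0)]
    (μ1 : Measure (X 0)) [μ1.IsHaarMeasure]
    [MeasurableSpace ↥S] [BorelSpace ↥S]
    (ν : X 0 → Measure ↥S) (hprob : ∀ x, IsProbabilityMeasure (ν x))
    (hfiber : ∀ x : X 0, ν x {z : ↥S | (z : ∀ i, X i) 0 = x} = 1)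
    (hνinv : ∀ (x : X 0) (k : ↥S), (k : ∀ i, X i) 0 = 1 →
      Measure.map (fun z : ↥S => k * z) (ν x) = ν x)
    (μinf : Measure ↥S)
    (hμinf : ∀ Z : Set ↥S, MeasurableSet Z → μinf Z = ∫⁻ x, ν x Z ∂μ1) :
    LocallyCompactSpace ↥S ∧ IsTopologicalGroup ↥S ∧ μinf.IsHaarMeasure := by
  classical
  have hmulS : ∀ g : ↥S, Measurable (fun z : ↥S => g * z) :=
    fun g => (continuous_const.mul continuous_id).measurable
  -- S is closed in the product
  have hSclosed : IsClosed (S : Set (∀ i, X i)) := by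
    rw [hS]
    have heq : {x : ∀ i, X i | ∀ i, P i (x (i + 1)) = x i}
        = ⋂ i, {x : ∀ i, X i | P i (x (i + 1)) = x i} := by
      ext x; simp [Set.mem_iInter]
    rw [heq]
    exact isClosed_iInter fun i =>
      isClosed_eq ((hcont i).comp (continuous_apply (i + 1))) (continuous_apply i)
  -- each P i is proper (preimages of compacts are compact)
  have hproper : ∀ (i : ℕ) (C : Set (X i)), IsCompact C → IsCompact ((P i) ⁻¹' C) := by
    intro i C hC
    have hopen : IsOpenMap (P i) := (hcov i).isOpenMap
    choose sec hsec using hsurj i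
    choose V hVc hVn using fun y : X i => exists_compact_mem_nhds (sec y)
    obtain ⟨t, ht⟩ := hC.elim_finite_subcover (fun y => P i '' interior (V y))
      (fun y => hopen _ isOpen_interior)
      (fun y hy => Set.mem_iUnion.2
        ⟨y, ⟨sec y, mem_interior_iff_mem_nhds.2 (hVn y), hsec y⟩⟩)
    haveI := hkerfin i
    have hWc : IsCompact (⋃ y ∈ t, ⋃ n : (P i).ker, (fun z => (n : X (i + 1)) * z) '' V y) :=
      t.finite_toSet.isCompact_biUnion fun y _ =>
        isCompact_iUnion fun n => (hVc y).image (continuous_const.mul continuous_id)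
    refine IsCompact.of_isClosed_subset hWc (hC.isClosed.preimage (hcont i)) ?_
    intro x hx
    have hx' : P i x ∈ ⋃ y ∈ t, P i '' interior (V y) := ht hx
    rw [Set.mem_iUnion₂] at hx'
    obtain ⟨y, hyt, v, hv, hpv⟩ := hx'
    refine Set.mem_biUnion hyt ?_
    refine Set.mem_iUnion.2 ⟨⟨x * v⁻¹, ?_⟩, v, interior_subset hv, ?_⟩
    · have : P i (x * v⁻¹) = 1 := by
        rw [map_mul, map_inv, hpv, mul_inv_cancel]
      simpa [MonoidHom.mem_ker] using this
    · simp [mul_assoc]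
  -- towers of compact sets
  have tower_compact : ∀ (C : Set (X 0)), IsCompact C → ∀ i, IsCompact (stmt5Tower P C i) := by
    intro C hC i
    induction i with
    | zero => exact hC
    | succ i ih => exact hproper i _ ih
  have tower_mem : ∀ (C : Set (X 0)) (z : ↥S), (z : ∀ i, X i) 0 ∈ C →
      ∀ i, (z : ∀ i, X i) i ∈ stmt5Tower P C i := by
    intro C z h0 i
    have hzS : (z : ∀ i, X i) ∈ (S : Set (∀ i, X i)) := z.2
    rw [hS] at hzS
    induction i with
    | zero => exact h0
    | succ i ih =>
      show P i ((z : ∀ i, X i) (i + 1)) ∈ stmt5Tower P C i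
      rw [hzS i]; exact ih
  -- compact subsets of S
  have hTC : ∀ (C : Set (X 0)), IsCompact C →
      IsCompact ((Subtype.val : ↥S → ∀ i, X i) ⁻¹' Set.pi Set.univ (stmt5Tower P C)) := by
    intro C hC
    exact hSclosed.isClosedEmbedding_subtypeVal.isCompact_preimage
      (isCompact_univ_pi (tower_compact C hC))
  have hTC_nhds : ∀ (C : Set (X 0)) (z : ↥S), C ∈ nhds ((z : ∀ i, X i) 0) →
      ((Subtype.val : ↥S → ∀ i, X i) ⁻¹' Set.pi Set.univ (stmt5Tower P C)) ∈ nhds z := by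
    intro C z hCz
    have hopen : IsOpen {w : ↥S | (w : ∀ i, X i) 0 ∈ interior C} :=
      isOpen_interior.preimage ((continuous_apply 0).comp continuous_subtype_val)
    refine Filter.mem_of_superset
      (hopen.mem_nhds (by exact mem_interior_iff_mem_nhds.2 hCz)) ?_
    intro w hw i _
    exact tower_mem C w (interior_subset hw) i
  haveI : WeaklyLocallyCompactSpace ↥S := by
    constructor
    intro z
    obtain ⟨C, hCc, hCn⟩ := exists_compact_mem_nhds ((z : ∀ i, X i) 0)
    exact ⟨_, hTC C hCc, hTC_nhds C z hCn⟩
  -- fibers are measurable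
  have hFmeas : ∀ y : X 0, MeasurableSet {z : ↥S | (z : ∀ i, X i) 0 = y} := by
    intro y
    exact (((continuous_apply 0).comp continuous_subtype_val).measurable)
      isClosed_singleton.measurableSet
  -- the fiber subgroup K
  set Ksub : Subgroup ↥S := ((Pi.evalMonoidHom X 0).comp S.subtype).ker with hKsubdef
  have hKmem : ∀ k : ↥S, k ∈ Ksub ↔ (k : ∀ i, X i) 0 = 1 := fun k => Iff.rfl
  have hKclosed : IsClosed (Ksub : Set ↥S) := by
    have : (Ksub : Set ↥S) = (fun z : ↥S => (z : ∀ i, X i) 0) ⁻¹' {1} := rfl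
    rw [this]
    exact isClosed_singleton.preimage ((continuous_apply 0).comp continuous_subtype_val)
  have hKcompact : IsCompact (Ksub : Set ↥S) := by
    refine IsCompact.of_isClosed_subset (hTC {1} isCompact_singleton) hKclosed ?_
    intro k hk i _
    exact tower_mem {1} k (by simpa using (hKmem k).1 hk) i
  haveI : CompactSpace ↥Ksub := isCompact_iff_compactSpace.mp hKcompact
  -- finiteness of the tower over {1}
  have hFfin : ∀ i, (stmt5Tower P ({1} : Set (X 0)) i).Finite := by
    intro i
    induction i with
    | zero => exact Set.finite_singleton 1
    | succ i ih =>
      have heq : stmt5Tower P ({1} : Set (X 0)) (i + 1)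
          = ⋃ c ∈ stmt5Tower P ({1} : Set (X 0)) i, (P i) ⁻¹' {c} := by
        ext x; simp [stmt5Tower]
      rw [heq]
      refine ih.biUnion fun c _ => ?_
      obtain ⟨x0, hx0⟩ := hsurj i c
      haveI := hkerfin i
      have hsub : (P i) ⁻¹' {c} ⊆ (fun n : (P i).ker => (n : X (i + 1)) * x0) '' Set.univ := by
        intro x hx
        have hx' : P i x = c := hx
        refine ⟨⟨x * x0⁻¹, ?_⟩, trivial, by simp [mul_assoc]⟩
        have : P i (x * x0⁻¹) = 1 := by rw [map_mul, map_inv, hx', hx0, mul_inv_cancel]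
        simpa [MonoidHom.mem_ker] using this
      exact (Set.finite_univ.image _).subset hsub
  -- second countability of K
  haveI : SecondCountableTopology ↥Ksub := by
    haveI : ∀ i, Finite ↥(stmt5Tower P ({1} : Set (X 0)) i) := fun i => (hFfin i).to_subtype
    let e : ↥Ksub → ∀ i, ↥(stmt5Tower P ({1} : Set (X 0)) i) := fun k i =>
      ⟨((k : ↥S) : ∀ i, X i) i,
        tower_mem {1} (k : ↥S) (by simpa using (hKmem (k : ↥S)).1 k.2) i⟩
    have hec : Continuous e := continuous_pi fun i =>
      Continuous.subtype_mk
        (((continuous_apply i).comp continuous_subtype_val).comp continuous_subtype_val) _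
    have hgc : Continuous
        (fun a : (∀ i, ↥(stmt5Tower P ({1} : Set (X 0)) i)) => fun i => (a i : X i)) :=
      continuous_pi fun i => continuous_subtype_val.comp (continuous_apply i)
    have hind : Topology.IsInducing e := by
      refine Topology.IsInducing.of_comp hec hgc ?_
      exact (Topology.IsInducing.subtypeVal.comp Topology.IsInducing.subtypeVal)
    exact hind.secondCountableTopology
  letI : MeasurableSpace ↥Ksub := borel _
  haveI : BorelSpace ↥Ksub := ⟨rfl⟩
  haveI : Nonempty ↥Ksub := ⟨1⟩
  let Kpos : TopologicalSpace.PositiveCompacts ↥Ksub :=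
    ⟨⟨Set.univ, isCompact_univ⟩, by simpa [interior_univ] using Set.univ_nonempty⟩
  -- key uniqueness lemma on fibers
  have key : ∀ (y : X 0) (μa μb : Measure ↥S),
      IsProbabilityMeasure μa → IsProbabilityMeasure μb →
      μa {z : ↥S | (z : ∀ i, X i) 0 = y} = 1 → μb {z : ↥S | (z : ∀ i, X i) 0 = y} = 1 →
      (∀ k : ↥S, (k : ∀ i, X i) 0 = 1 → Measure.map (fun z : ↥S => k * z) μa = μa) →
      (∀ k : ↥S, (k : ∀ i, X i) 0 = 1 → Measure.map (fun z : ↥S => k * z) μb = μb) →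
      μa = μb := by
    intro y μa μb hpa hpb hfa hfb hia hib
    set Fib : Set ↥S := {z : ↥S | (z : ∀ i, X i) 0 = y} with hFibdef
    have hFibMeas : MeasurableSet Fib := hFmeas y
    have hwne : Fib.Nonempty := by
      rcases Set.eq_empty_or_nonempty Fib with h | h
      · rw [h] at hfa; simp at hfa
      · exact h
    obtain ⟨w, hwF⟩ := hwne
    have hwF' : (w : ∀ i, X i) 0 = y := hwF
    let f : ↥Ksub → ↥S := fun k => w * (k : ↥S)
    have hfc : Continuous f := continuous_const.mul continuous_subtype_val
    have hfinj : Function.Injective f := fun a b h =>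
      Subtype.coe_injective (mul_left_cancel h)
    have hfme : MeasurableEmbedding f :=
      (hfc.isClosedEmbedding hfinj).measurableEmbedding
    have hrange : Set.range f = Fib := by
      ext z
      constructor
      · rintro ⟨k, rfl⟩
        have hk : ((k : ↥S) : ∀ i, X i) 0 = 1 := (hKmem (k : ↥S)).1 k.2
        show ((w * (k : ↥S) : ↥S) : ∀ i, X i) 0 = y
        rw [Subgroup.coe_mul]
        simp [Pi.mul_apply, hk, hwF']
      · intro hz
        have hz' : (z : ∀ i, X i) 0 = y := hz
        refine ⟨⟨w⁻¹ * z, ?_⟩, ?_⟩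
        · rw [hKmem]
          rw [Subgroup.coe_mul, Subgroup.coe_inv]
          simp [Pi.mul_apply, hwF', hz']
        · simp [f]
    have main : ∀ μ : Measure ↥S, IsProbabilityMeasure μ → μ Fib = 1 →
        (∀ k : ↥S, (k : ∀ i, X i) 0 = 1 → Measure.map (fun z : ↥S => k * z) μ = μ) →
        μ = Measure.map f (Measure.haarMeasure Kpos) := by
      intro μ hp hf1 hinv
      haveI := hp
      set m : Measure ↥Ksub := Measure.comap f μ with hmdef
      have hmap : Measure.map f m = μ := by
        rw [hmdef, hfme.map_comap, hrange]
        refine Measure.restrict_eq_self_of_ae_mem ?_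
        have hc : μ Fibᶜ = 0 := by
          have h2 := measure_compl hFibMeas (measure_ne_top μ Fib)
          rw [hf1, measure_univ] at h2
          simpa using h2
        rw [ae_iff]
        simpa [Set.compl_def] using hc
      haveI hmp : IsProbabilityMeasure m := by
        constructor
        rw [hmdef, hfme.comap_apply, Set.image_univ, hrange, hf1]
      haveI : m.IsMulLeftInvariant := by
        constructor
        intro k0
        have hmk0 : Measurable (fun x : ↥Ksub => k0 * x) :=
          (continuous_const.mul continuous_id).measurable
        have hcomp : (f ∘ fun x : ↥Ksub => k0 * x) = (fun z : ↥S => (k0 : ↥S) * z) ∘ f := by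
          funext k
          show w * ((k0 * k : ↥Ksub) : ↥S) = (k0 : ↥S) * (w * (k : ↥S))
          rw [Subgroup.coe_mul]
          exact mul_left_comm _ _ _
        have h1 : Measure.map f (Measure.map (fun x : ↥Ksub => k0 * x) m)
            = Measure.map f m :=
          calc Measure.map f (Measure.map (fun x : ↥Ksub => k0 * x) m)
              = Measure.map (f ∘ fun x : ↥Ksub => k0 * x) m :=
                Measure.map_map hfme.measurable hmk0
            _ = Measure.map ((fun z : ↥S => (k0 : ↥S) * z) ∘ f) m := by rw [hcomp]
            _ = Measure.map (fun z : ↥S => (k0 : ↥S) * z) (Measure.map f m) :=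
                (Measure.map_map (hmulS (k0 : ↥S)) hfme.measurable).symm
            _ = Measure.map (fun z : ↥S => (k0 : ↥S) * z) μ := by rw [hmap]
            _ = μ := hinv (k0 : ↥S) ((hKmem (k0 : ↥S)).1 k0.2)
            _ = Measure.map f m := hmap.symm
        have h2 := congrArg (Measure.comap f) h1
        rwa [hfme.comap_map, hfme.comap_map] at h2
      have huniq := Measure.haarMeasure_unique m Kpos
      have hK1 : m (Kpos : Set ↥Ksub) = 1 := by
        show m Set.univ = 1
        exact measure_univ
      rw [hK1, one_smul] at huniq
      rw [← hmap, huniq]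
    rw [main μa hpa hfa hia, main μb hpb hfb hib]
  -- translation of fiber measures
  have transl : ∀ (g : ↥S) (x : X 0),
      Measure.map (fun z : ↥S => g * z) (ν x) = ν ((g : ∀ i, X i) 0 * x) := by
    intro g x
    haveI := hprob x
    refine key ((g : ∀ i, X i) 0 * x) _ _
      (Measure.isProbabilityMeasure_map (hmulS g).aemeasurable) (hprob _)
      ?_ (hfiber _) ?_ (fun k hk => hνinv _ k hk)
    · rw [Measure.map_apply (hmulS g) (hFmeas _)]
      have hpre : (fun z : ↥S => g * z) ⁻¹'
          {z : ↥S | (z : ∀ i, X i) 0 = (g : ∀ i, X i) 0 * x}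
          = {z : ↥S | (z : ∀ i, X i) 0 = x} := by
        ext z
        simp only [Set.mem_preimage, Set.mem_setOf_eq, Subgroup.coe_mul, Pi.mul_apply]
        exact mul_right_inj _
      rw [hpre, hfiber x]
    · intro k hk
      have hcomp : ((fun z : ↥S => k * z) ∘ fun z : ↥S => g * z)
          = ((fun z : ↥S => g * z) ∘ fun z : ↥S => k * z) := by
        funext z; exact mul_left_comm _ _ _
      rw [Measure.map_map (hmulS k) (hmulS g), hcomp,
        ← Measure.map_map (hmulS g) (hmulS k), hνinv x k hk]
  -- left invariance of μinf
  haveI : μinf.IsMulLeftInvariant := by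
    constructor
    intro g
    refine Measure.ext fun s hs => ?_
    rw [Measure.map_apply (hmulS g) hs, hμinf _ ((hmulS g) hs), hμinf s hs]
    have hpt : ∀ x, ν x ((fun z : ↥S => g * z) ⁻¹' s) = ν ((g : ∀ i, X i) 0 * x) s := by
      intro x
      rw [← transl g x, Measure.map_apply (hmulS g) hs]
    simp_rw [hpt]
    exact lintegral_mul_left_eq_self (fun y => ν y s) ((g : ∀ i, X i) 0)
  -- a compact neighborhood of 1 of positive finite μinf-measure
  obtain ⟨C, hCc, hCn⟩ := exists_compact_mem_nhds (1 : X 0)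
  set T : Set ↥S := (Subtype.val : ↥S → ∀ i, X i) ⁻¹' Set.pi Set.univ (stmt5Tower P C)
    with hTdef
  have hTc : IsCompact T := hTC C hCc
  have hTn : T ∈ nhds (1 : ↥S) := hTC_nhds C 1 (by simpa using hCn)
  have hTmeas : MeasurableSet T := hTc.isClosed.measurableSet
  have hupper : ∀ x : X 0, x ∉ C → ν x T = 0 := by
    intro x hx
    have hsub : T ⊆ {z : ↥S | (z : ∀ i, X i) 0 = x}ᶜ := by
      intro z hz hzx
      have h0 : (z : ∀ i, X i) 0 ∈ C := hz 0 (Set.mem_univ 0)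
      have hzx' : (z : ∀ i, X i) 0 = x := hzx
      exact hx (hzx' ▸ h0)
    have h0 : ν x {z : ↥S | (z : ∀ i, X i) 0 = x}ᶜ = 0 := by
      haveI := hprob x
      have h2 := measure_compl (hFmeas x) (measure_ne_top (ν x) _)
      rw [hfiber x, measure_univ] at h2
      simpa using h2
    exact measure_mono_null hsub h0
  have hlower : ∀ x : X 0, x ∈ C → 1 ≤ ν x T := by
    intro x hx
    rw [← hfiber x]
    refine measure_mono ?_
    intro z hz i _
    have hz' : (z : ∀ i, X i) 0 = x := hz
    exact tower_mem C z (by rw [hz']; exact hx) i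
  have hμT_le : μinf T ≤ μ1 C := by
    rw [hμinf T hTmeas]
    have hle : ∀ x, ν x T ≤ C.indicator (fun _ => (1 : ENNReal)) x := by
      intro x
      by_cases hx : x ∈ C
      · rw [Set.indicator_of_mem hx]
        haveI := hprob x
        exact prob_le_one
      · rw [Set.indicator_of_notMem hx, hupper x hx]
    calc ∫⁻ x, ν x T ∂μ1 ≤ ∫⁻ x, C.indicator (fun _ => (1 : ENNReal)) x ∂μ1 :=
          lintegral_mono hle
      _ = μ1 C := by
          rw [lintegral_indicator hCc.measurableSet]
          simp
  have hμT_ge : μ1 C ≤ μinf T := by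
    rw [hμinf T hTmeas]
    have hge : ∀ x, C.indicator (fun _ => (1 : ENNReal)) x ≤ ν x T := by
      intro x
      by_cases hx : x ∈ C
      · rw [Set.indicator_of_mem hx]; exact hlower x hx
      · rw [Set.indicator_of_notMem hx]; exact zero_le
    calc μ1 C = ∫⁻ x, C.indicator (fun _ => (1 : ENNReal)) x ∂μ1 := by
          rw [lintegral_indicator hCc.measurableSet]
          simp
      _ ≤ ∫⁻ x, ν x T ∂μ1 := lintegral_mono hge
  have hpos : μinf T ≠ 0 := by
    have h1 : 0 < μ1 C :=
      μ1.measure_pos_of_nonempty_interior ⟨1, mem_interior_iff_mem_nhds.2 hCn⟩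
    intro h
    rw [h] at hμT_ge
    exact h1.ne' (le_zero_iff.mp hμT_ge)
  have hfin : μinf T ≠ ⊤ := (lt_of_le_of_lt hμT_le hCc.measure_lt_top).ne
  have hint : (interior T).Nonempty := ⟨1, mem_interior_iff_mem_nhds.2 hTn⟩
  exact ⟨inferInstance, inferInstance,
    Measure.isHaarMeasure_of_isCompact_nonempty_interior μinf T hTc hint hpos hfin⟩
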